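/- Let φ be a conformal immersion on an open set U ⊆ ℝ² with conformal factor λ, with unit normal n := (φ_u × φ_v)/‖φ_u × φ_v‖, mean curvature H := ⟨Δφ, n⟩/(2λ²), and μ := (∂_z φ_z, n). Then the Codazzi equation holds at every point of U: ∂_z̄ μ = (λ²/2) ∂_z H. -/

import Mathlib

open Complex

noncomputable section

/-- Euclidean 3-space. -/
abbrev E3 : Type := EuclideanSpace ℝ (Fin 3)

/-- Partial derivative in the first (u) coordinate direction. -/
def pu {F : Type} [NormedAddCommGroup F] [NormedSpace ℝ F]
    (f : ℝ × ℝ → F) (p : ℝ × ℝ) : F := fderiv ℝ f p (1, 0)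

/-- Partial derivative in the second (v) coordinate direction. -/
def pv {F : Type} [NormedAddCommGroup F] [NormedSpace ℝ F]
    (f : ℝ × ℝ → F) (p : ℝ × ℝ) : F := fderiv ℝ f p (0, 1)

/-- Cross product on ℝ³. -/
def cross (a b : E3) : E3 :=
  (WithLp.equiv 2 (Fin 3 → ℝ)).symm
    ![a 1 * b 2 - a 2 * b 1, a 2 * b 0 - a 0 * b 2, a 0 * b 1 - a 1 * b 0]

/-- The Euclidean inner product on ℝ³. -/
def ip (a b : E3) : ℝ := @inner ℝ _ _ a b

/-- `φ` is a smooth conformal immersion on the open set `U ⊆ ℝ²` with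
(smooth, positive) conformal factor `lam`:  ⟨φ_u,φ_u⟩ = λ², ⟨φ_v,φ_v⟩ = λ²,
⟨φ_u,φ_v⟩ = 0 at every point of `U`. -/
def IsConfImm (U : Set (ℝ × ℝ)) (φ : ℝ × ℝ → E3) (lam : ℝ × ℝ → ℝ) : Prop :=
  IsOpen U ∧ ContDiffOn ℝ (⊤ : ℕ∞) φ U ∧ ContDiffOn ℝ (⊤ : ℕ∞) lam U ∧
    ∀ p ∈ U, 0 < lam p ∧
      ip (pu φ p) (pu φ p) = (lam p) ^ 2 ∧
      ip (pv φ p) (pv φ p) = (lam p) ^ 2 ∧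
      ip (pu φ p) (pv φ p) = 0

/-- Complexification ℝ³ ↪ ℂ³. -/
def toC (x : E3) : Fin 3 → ℂ := fun j => (x j : ℂ)

/-- Complex-bilinear dot product on ℂ³:  (a,b) = Σⱼ aⱼ bⱼ. -/
def cdot (a b : Fin 3 → ℂ) : ℂ := ∑ j, a j * b j

/-- ∂_z = ½(∂_u − i ∂_v) for maps into complex normed spaces. -/
def dz {F : Type} [NormedAddCommGroup F] [NormedSpace ℂ F]
    (f : ℝ × ℝ → F) (p : ℝ × ℝ) : F :=
  (2 : ℂ)⁻¹ • (pu f p - Complex.I • pv f p)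

/-- ∂_z̄ = ½(∂_u + i ∂_v) for maps into complex normed spaces. -/
def dzbar {F : Type} [NormedAddCommGroup F] [NormedSpace ℂ F]
    (f : ℝ × ℝ → F) (p : ℝ × ℝ) : F :=
  (2 : ℂ)⁻¹ • (pu f p + Complex.I • pv f p)

/-- `f_z := ½(f_u − i f_v) ∈ ℂ³` for a real-vector-valued map `f` (in particular `φ_z`). -/
def phiz (f : ℝ × ℝ → E3) (p : ℝ × ℝ) : Fin 3 → ℂ :=
  (2 : ℂ)⁻¹ • (toC (pu f p) - Complex.I • toC (pv f p))

/-- `f_z̄ := ½(f_u + i f_v) ∈ ℂ³` for a real-vector-valued map `f` (in particular `φ_z̄`). -/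
def phizbar (f : ℝ × ℝ → E3) (p : ℝ × ℝ) : Fin 3 → ℂ :=
  (2 : ℂ)⁻¹ • (toC (pu f p) + Complex.I • toC (pv f p))

/-- The unit normal n = (φ_u × φ_v)/‖φ_u × φ_v‖. -/
def nvec (φ : ℝ × ℝ → E3) (p : ℝ × ℝ) : E3 :=
  ‖cross (pu φ p) (pv φ p)‖⁻¹ • cross (pu φ p) (pv φ p)

/-- Componentwise Laplacian Δ = ∂_uu + ∂_vv. -/
def lap {F : Type} [NormedAddCommGroup F] [NormedSpace ℝ F]
    (f : ℝ × ℝ → F) (p : ℝ × ℝ) : F := pu (pu f) p + pv (pv f) p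

/-- Mean curvature H = ⟨Δφ, n⟩/(2λ²). -/
def mcurv (φ : ℝ × ℝ → E3) (lam : ℝ × ℝ → ℝ) (p : ℝ × ℝ) : ℝ :=
  ip (lap φ p) (nvec φ p) / (2 * (lam p) ^ 2)

/-- μ := (∂_z φ_z, n). -/
def muQ (φ : ℝ × ℝ → E3) (p : ℝ × ℝ) : ℂ :=
  cdot (dz (phiz φ) p) (toC (nvec φ p))

/-! ### Auxiliary algebra lemmas -/

lemma ip_expand (a b : E3) : ip a b = a 0 * b 0 + a 1 * b 1 + a 2 * b 2 := by
  simp [ip, PiLp.inner_apply, RCLike.inner_apply, Fin.sum_univ_three]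
  ring

lemma crossE3_apply (a b : E3) (j : Fin 3) : cross a b j =
    ![a 1 * b 2 - a 2 * b 1, a 2 * b 0 - a 0 * b 2, a 0 * b 1 - a 1 * b 0] j := by
  rfl

lemma ip_cross (x a b : E3) : ip x (cross a b) =
    x 0 * (a 1 * b 2 - a 2 * b 1) + x 1 * (a 2 * b 0 - a 0 * b 2)
      + x 2 * (a 0 * b 1 - a 1 * b 0) := by
  rw [ip_expand, crossE3_apply, crossE3_apply, crossE3_apply]
  norm_num
  exact Or.inl rfl

lemma ip_comm (x y : E3) : ip x y = ip y x := by rw [ip_expand, ip_expand]; ring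
lemma ip_add_right (x y z : E3) : ip x (y + z) = ip x y + ip x z := by
  simp [ip, inner_add_right]
lemma ip_add_left (x y z : E3) : ip (x + y) z = ip x z + ip y z := by
  simp [ip, inner_add_left]
lemma ip_smul_right (r : ℝ) (x y : E3) : ip x (r • y) = r * ip x y := by
  simp [ip, inner_smul_right]

lemma D_yy (x y : E3) : ip x (cross y y) = 0 := by simp [ip_cross]; ring
lemma D_xy (x y : E3) : ip x (cross x y) = 0 := by simp [ip_cross]; ring
lemma D_yx (x y : E3) : ip x (cross y x) = 0 := by simp [ip_cross]; ring
lemma D_swap12 (x y z : E3) : ip x (cross y z) = -(ip y (cross x z)) := by simp [ip_cross]; ring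
lemma D_swap13 (x y z : E3) : ip x (cross y z) = -(ip z (cross y x)) := by simp [ip_cross]; ring
lemma D_swap23 (x y z : E3) : ip x (cross y z) = -(ip x (cross z y)) := by simp [ip_cross]; ring
lemma lagrange (a b : E3) : ip (cross a b) (cross a b) = ip a a * ip b b - (ip a b)^2 := by
  simp [ip_expand, crossE3_apply]; ring
lemma D_tri1 (x y z : E3) : ip x (cross y (cross y z)) = ip y z * ip x y - ip y y * ip x z := by
  simp [ip_expand, ip_cross, crossE3_apply]; ring
lemma D_tri2 (x y z : E3) : ip x (cross y (cross z y)) = ip y y * ip x z - ip y z * ip x y := by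
  simp [ip_expand, ip_cross, crossE3_apply]; ring
lemma frame_scalar (a b w x y : E3) :
    (ip a a * ip b b - (ip a b)^2) * ip x (cross y w)
      = (ip b b * ip w a - ip a b * ip w b) * ip x (cross y a)
        + (ip a a * ip w b - ip a b * ip w a) * ip x (cross y b)
        + ip w (cross a b) * ip x (cross y (cross a b)) := by
  simp [ip_expand, ip_cross, crossE3_apply]; ring

/-! ### cdot and toC lemmas -/

lemma cdot_toC (x y : E3) : cdot (toC x) (toC y) = ((ip x y : ℝ) : ℂ) := by
  simp [cdot, toC, ip_expand, Fin.sum_univ_three]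

lemma cdot_smul_left (z : ℂ) (x y : Fin 3 → ℂ) : cdot (z • x) y = z * cdot x y := by
  simp only [cdot, Pi.smul_apply, smul_eq_mul, Finset.mul_sum]
  exact Finset.sum_congr rfl fun i _ => by ring

lemma cdot_sub_left (x x' y : Fin 3 → ℂ) : cdot (x - x') y = cdot x y - cdot x' y := by
  simp [cdot, sub_mul, Finset.sum_sub_distrib]

lemma cdot_smul_right (z : ℂ) (x y : Fin 3 → ℂ) : cdot x (z • y) = z * cdot x y := by
  simp only [cdot, Pi.smul_apply, smul_eq_mul, Finset.mul_sum]
  exact Finset.sum_congr rfl fun i _ => by ring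

lemma toC_smul (r : ℝ) (x : E3) : toC (r • x) = ((r : ℝ) : ℂ) • toC x := by
  funext j
  simp [toC, Complex.ofReal_mul]

/-! ### Calculus toolkit -/

section Toolkit
variable {F G : Type} [NormedAddCommGroup F] [NormedSpace ℝ F]
  [NormedAddCommGroup G] [NormedSpace ℝ G]
  {U : Set (ℝ × ℝ)} {f g : ℝ × ℝ → F} {p : ℝ × ℝ}

lemma fderiv_congr_open (hU : IsOpen U) (hp : p ∈ U) (hfg : ∀ q ∈ U, f q = g q) :
    fderiv ℝ f p = fderiv ℝ g p :=
  Filter.EventuallyEq.fderiv_eq (by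
    filter_upwards [hU.mem_nhds hp] with q hq using hfg q hq)

lemma diffAt (hU : IsOpen U) (hf : ContDiffOn ℝ (⊤:ℕ∞) f U) (hp : p ∈ U) :
    DifferentiableAt ℝ f p :=
  (hf.contDiffAt (hU.mem_nhds hp)).differentiableAt (by simp)

lemma contDiffOn_pu (hU : IsOpen U) (hf : ContDiffOn ℝ (⊤:ℕ∞) f U) :
    ContDiffOn ℝ (⊤:ℕ∞) (pu f) U := by
  have h2 : ContDiffOn ℝ (⊤:ℕ∞) (fderiv ℝ f) U := by
    have := ((contDiffOn_infty_iff_fderiv_of_isOpen hU).mp (by exact_mod_cast hf)).2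
    exact_mod_cast this
  exact h2.clm_apply contDiffOn_const

lemma contDiffOn_pv (hU : IsOpen U) (hf : ContDiffOn ℝ (⊤:ℕ∞) f U) :
    ContDiffOn ℝ (⊤:ℕ∞) (pv f) U := by
  have h2 : ContDiffOn ℝ (⊤:ℕ∞) (fderiv ℝ f) U := by
    have := ((contDiffOn_infty_iff_fderiv_of_isOpen hU).mp (by exact_mod_cast hf)).2
    exact_mod_cast this
  exact h2.clm_apply contDiffOn_const

lemma clairaut (hU : IsOpen U) (hf : ContDiffOn ℝ (⊤:ℕ∞) f U) (hp : p ∈ U) :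
    pu (pv f) p = pv (pu f) p := by
  have hat : ContDiffAt ℝ (⊤:ℕ∞) f p := hf.contDiffAt (hU.mem_nhds hp)
  have hsym := (hat.isSymmSndFDerivAt (by simp; exact WithTop.coe_le_coe.mpr le_top)) (1,0) (0,1)
  have hd : DifferentiableAt ℝ (fderiv ℝ f) p :=
    (hat.fderiv_right (m := (⊤:ℕ∞)) (by exact_mod_cast le_top)).differentiableAt
      (by simp)
  have e1 : pu (pv f) p = fderiv ℝ (fderiv ℝ f) p (1,0) (0,1) := by
    show fderiv ℝ (fun q => fderiv ℝ f q (0,1)) p (1,0) = _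
    rw [fderiv_clm_apply hd (differentiableAt_const _)]
    simp
  have e2 : pv (pu f) p = fderiv ℝ (fderiv ℝ f) p (0,1) (1,0) := by
    show fderiv ℝ (fun q => fderiv ℝ f q (1,0)) p (0,1) = _
    rw [fderiv_clm_apply hd (differentiableAt_const _)]
    simp
  rw [e1, e2, hsym]

end Toolkit

/-! ### cross as a continuous bilinear map, and derivative rules -/

def crossLin : E3 →ₗ[ℝ] E3 →ₗ[ℝ] E3 :=
  LinearMap.mk₂ ℝ cross
    (by intro a a' b; apply PiLp.ext; intro j; fin_cases j <;>
      simp [crossE3_apply] <;> ring)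
    (by intro r a b; apply PiLp.ext; intro j; fin_cases j <;>
      simp [crossE3_apply] <;> ring)
    (by intro a b b'; apply PiLp.ext; intro j; fin_cases j <;>
      simp [crossE3_apply] <;> ring)
    (by intro r a b; apply PiLp.ext; intro j; fin_cases j <;>
      simp [crossE3_apply] <;> ring)

def crossL : E3 →L[ℝ] E3 →L[ℝ] E3 :=
  LinearMap.toContinuousLinearMap
    { toFun := fun a => LinearMap.toContinuousLinearMap (crossLin a)
      map_add' := by intro a a'; ext b; simp
      map_smul' := by intro r a; ext b; simp }

lemma crossL_apply (a b : E3) : crossL a b = cross a b := rfl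

def toCL : E3 →L[ℝ] (Fin 3 → ℂ) :=
  ContinuousLinearMap.pi (fun j => Complex.ofRealCLM.comp (EuclideanSpace.proj j))

lemma toCL_apply (x : E3) : toCL x = toC x := rfl

section Rules
variable {U : Set (ℝ × ℝ)} {f g : ℝ × ℝ → E3} {r s : ℝ × ℝ → ℝ} {p w : ℝ × ℝ}

lemma fderiv_cross_apply (hf : DifferentiableAt ℝ f p) (hg : DifferentiableAt ℝ g p) :
    fderiv ℝ (fun q => cross (f q) (g q)) p w
      = cross (fderiv ℝ f p w) (g p) + cross (f p) (fderiv ℝ g p w) := by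
  have h := crossL.fderiv_of_bilinear hf hg
  have h2 : (fun q => cross (f q) (g q)) = fun q => crossL (f q) (g q) := rfl
  rw [h2, h]
  simp [crossL_apply]
  exact add_comm _ _

lemma diffAt_cross (hf : DifferentiableAt ℝ f p) (hg : DifferentiableAt ℝ g p) :
    DifferentiableAt ℝ (fun q => cross (f q) (g q)) p := by
  have h2 : (fun q => cross (f q) (g q)) = fun q => crossL (f q) (g q) := rfl
  rw [h2]
  exact (crossL.isBoundedBilinearMap.differentiableAt _).comp p (hf.prodMk hg)

lemma contDiffOn_cross {n : ℕ∞} (hf : ContDiffOn ℝ n f U) (hg : ContDiffOn ℝ n g U) :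
    ContDiffOn ℝ n (fun q => cross (f q) (g q)) U := by
  have h2 : (fun q => cross (f q) (g q)) = fun q => crossL (f q) (g q) := rfl
  rw [h2]
  exact (crossL.isBoundedBilinearMap.contDiff.comp_contDiffOn (hf.prodMk hg))

lemma fderiv_ip_apply (hf : DifferentiableAt ℝ f p) (hg : DifferentiableAt ℝ g p) :
    fderiv ℝ (fun q => ip (f q) (g q)) p w
      = ip (fderiv ℝ f p w) (g p) + ip (f p) (fderiv ℝ g p w) := by
  have h := fderiv_inner_apply (𝕜 := ℝ) hf hg w
  simp only [ip]
  rw [h]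
  exact add_comm _ _

lemma diffAt_ip (hf : DifferentiableAt ℝ f p) (hg : DifferentiableAt ℝ g p) :
    DifferentiableAt ℝ (fun q => ip (f q) (g q)) p := hf.inner ℝ hg

lemma contDiffOn_ip {n : ℕ∞} (hf : ContDiffOn ℝ n f U) (hg : ContDiffOn ℝ n g U) :
    ContDiffOn ℝ n (fun q => ip (f q) (g q)) U := hf.inner ℝ hg

lemma fderiv_toC_apply (hf : DifferentiableAt ℝ f p) :
    fderiv ℝ (fun q => toC (f q)) p w = toC (fderiv ℝ f p w) := by
  have h : HasFDerivAt (fun q => toC (f q)) (toCL.comp (fderiv ℝ f p)) p :=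
    toCL.hasFDerivAt.comp p hf.hasFDerivAt
  rw [h.fderiv]
  rfl

lemma diffAt_toC (hf : DifferentiableAt ℝ f p) :
    DifferentiableAt ℝ (fun q => toC (f q)) p :=
  (toCL.hasFDerivAt.comp p hf.hasFDerivAt).differentiableAt

lemma fderiv_ofReal_apply (hr : DifferentiableAt ℝ r p) :
    fderiv ℝ (fun q => ((r q : ℝ) : ℂ)) p w = ((fderiv ℝ r p w : ℝ) : ℂ) := by
  have h : HasFDerivAt (fun q => ((r q : ℝ) : ℂ)) (Complex.ofRealCLM.comp (fderiv ℝ r p)) p :=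
    Complex.ofRealCLM.hasFDerivAt.comp p hr.hasFDerivAt
  rw [h.fderiv]
  rfl

lemma diffAt_ofReal (hr : DifferentiableAt ℝ r p) :
    DifferentiableAt ℝ (fun q => ((r q : ℝ) : ℂ)) p :=
  (Complex.ofRealCLM.hasFDerivAt.comp p hr.hasFDerivAt).differentiableAt

lemma fderiv_mul_apply (hr : DifferentiableAt ℝ r p) (hs : DifferentiableAt ℝ s p) :
    fderiv ℝ (fun q => r q * s q) p w
      = fderiv ℝ r p w * s p + r p * fderiv ℝ s p w := by
  rw [fderiv_fun_mul hr hs]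
  simp
  ring

lemma pu_def {F : Type} [NormedAddCommGroup F] [NormedSpace ℝ F] (f : ℝ × ℝ → F) (p : ℝ × ℝ) :
    pu f p = fderiv ℝ f p (1,0) := rfl
lemma pv_def {F : Type} [NormedAddCommGroup F] [NormedSpace ℝ F] (f : ℝ × ℝ → F) (p : ℝ × ℝ) :
    pv f p = fderiv ℝ f p (0,1) := rfl

end Rules

set_option maxHeartbeats 2000000 in
/-- Codazzi equation: ∂_z̄ μ = (λ²/2) ∂_z H. -/
theorem conformal_codazzi_equation
    (U : Set (ℝ × ℝ)) (φ : ℝ × ℝ → E3) (lam : ℝ × ℝ → ℝ)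
    (h : IsConfImm U φ lam) :
    ∀ p ∈ U,
      dzbar (fun q => muQ φ q) p
        = (lam p : ℂ) ^ 2 / 2 * dz (fun q => (mcurv φ lam q : ℂ)) p := by
  obtain ⟨hU, hφ, hlam, hpt⟩ := h
  intro p hp
  -- function-level abbreviations
  set Nf : ℝ × ℝ → E3 := fun q => cross (pu φ q) (pv φ q) with hNf
  set Ef : ℝ × ℝ → ℝ := fun q => ip (pu (pu φ) q) (Nf q) with hEf
  set Ff : ℝ × ℝ → ℝ := fun q => ip (pv (pu φ) q) (Nf q) with hFf
  set Gf : ℝ × ℝ → ℝ := fun q => ip (pv (pv φ) q) (Nf q) with hGf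
  set Xf : ℝ × ℝ → ℝ := fun q => (Ef q - Gf q) / (4 * (lam q * lam q)) with hXf
  set Yf : ℝ × ℝ → ℝ := fun q => -Ff q / (2 * (lam q * lam q)) with hYf
  set Wf : ℝ × ℝ → ℝ := fun q => (Ef q + Gf q) / (2 * ((lam q * lam q) * (lam q * lam q)))
    with hWf
  -- smoothness
  have sA : ContDiffOn ℝ (⊤:ℕ∞) (pu φ) U := contDiffOn_pu hU hφ
  have sB : ContDiffOn ℝ (⊤:ℕ∞) (pv φ) U := contDiffOn_pv hU hφ
  have sC : ContDiffOn ℝ (⊤:ℕ∞) (pv (pu φ)) U := contDiffOn_pv hU sA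
  have sAU : ContDiffOn ℝ (⊤:ℕ∞) (pu (pu φ)) U := contDiffOn_pu hU sA
  have sBV : ContDiffOn ℝ (⊤:ℕ∞) (pv (pv φ)) U := contDiffOn_pv hU sB
  have sN : ContDiffOn ℝ (⊤:ℕ∞) Nf U := contDiffOn_cross sA sB
  have sE : ContDiffOn ℝ (⊤:ℕ∞) Ef U := contDiffOn_ip sAU sN
  have sF : ContDiffOn ℝ (⊤:ℕ∞) Ff U := contDiffOn_ip sC sN
  have sG : ContDiffOn ℝ (⊤:ℕ∞) Gf U := contDiffOn_ip sBV sN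
  -- basic facts
  have hlpos : ∀ q ∈ U, 0 < lam q := fun q hq => (hpt q hq).1
  have hlne : ∀ q ∈ U, lam q ≠ 0 := fun q hq => ne_of_gt (hlpos q hq)
  have hCB : ∀ q ∈ U, pu (pv φ) q = pv (pu φ) q := fun q hq => clairaut hU hφ hq
  -- norm of the unnormalized normal
  have hnv : ∀ q ∈ U, nvec φ q = ((lam q * lam q)⁻¹ : ℝ) • Nf q := by
    intro q hq
    have h1 : ip (Nf q) (Nf q) = (lam q * lam q) * (lam q * lam q) := by
      rw [hNf]
      simp only
      rw [lagrange, (hpt q hq).2.1, (hpt q hq).2.2.1, (hpt q hq).2.2.2]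
      ring
    have h2 : ‖Nf q‖ ^ 2 = (lam q * lam q) ^ 2 := by
      rw [← real_inner_self_eq_norm_sq]
      have : @inner ℝ _ _ (Nf q) (Nf q) = ip (Nf q) (Nf q) := rfl
      rw [this, h1]; ring
    have h3 : (‖Nf q‖ - lam q * lam q) * (‖Nf q‖ + lam q * lam q) = 0 := by
      linear_combination h2
    have h4 : ‖Nf q‖ = lam q * lam q := by
      rcases mul_eq_zero.mp h3 with h5 | h5
      · linarith
      · have := norm_nonneg (Nf q)
        have hq2 := hlpos q hq
        nlinarith
    show ‖cross (pu φ q) (pv φ q)‖⁻¹ • cross (pu φ q) (pv φ q) = _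
    rw [show cross (pu φ q) (pv φ q) = Nf q from rfl, h4]
  -- differentiability at points of U
  have dA : ∀ q ∈ U, DifferentiableAt ℝ (pu φ) q := fun q hq => diffAt hU sA hq
  have dB : ∀ q ∈ U, DifferentiableAt ℝ (pv φ) q := fun q hq => diffAt hU sB hq
  have dC : ∀ q ∈ U, DifferentiableAt ℝ (pv (pu φ)) q := fun q hq => diffAt hU sC hq
  have dAU : ∀ q ∈ U, DifferentiableAt ℝ (pu (pu φ)) q := fun q hq => diffAt hU sAU hq
  have dBV : ∀ q ∈ U, DifferentiableAt ℝ (pv (pv φ)) q := fun q hq => diffAt hU sBV hq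
  have dN : ∀ q ∈ U, DifferentiableAt ℝ Nf q := fun q hq => diffAt hU sN hq
  have dE : ∀ q ∈ U, DifferentiableAt ℝ Ef q := fun q hq => diffAt hU sE hq
  have dF : ∀ q ∈ U, DifferentiableAt ℝ Ff q := fun q hq => diffAt hU sF hq
  have dG : ∀ q ∈ U, DifferentiableAt ℝ Gf q := fun q hq => diffAt hU sG hq
  have dlam : ∀ q ∈ U, DifferentiableAt ℝ lam q := fun q hq => diffAt hU hlam hq
  have hden : ∀ q ∈ U, (4 : ℝ) * (lam q * lam q) ≠ 0 := by
    intro q hq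
    have := hlne q hq
    positivity
  have hden2 : ∀ q ∈ U, (2 : ℝ) * (lam q * lam q) ≠ 0 := by
    intro q hq
    have := hlne q hq
    positivity
  have hden4 : ∀ q ∈ U, (2 : ℝ) * ((lam q * lam q) * (lam q * lam q)) ≠ 0 := by
    intro q hq
    have := hlne q hq
    positivity
  have dX : ∀ q ∈ U, DifferentiableAt ℝ Xf q := by
    intro q hq
    rw [hXf]
    simp only [div_eq_mul_inv]
    exact ((dE q hq).sub (dG q hq)).mul
      ((((dlam q hq).mul (dlam q hq)).const_mul (4:ℝ)).inv (hden q hq))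
  have dY : ∀ q ∈ U, DifferentiableAt ℝ Yf q := by
    intro q hq
    rw [hYf]
    simp only [div_eq_mul_inv]
    exact (dF q hq).neg.mul
      ((((dlam q hq).mul (dlam q hq)).const_mul (2:ℝ)).inv (hden2 q hq))
  have dW : ∀ q ∈ U, DifferentiableAt ℝ Wf q := by
    intro q hq
    rw [hWf]
    simp only [div_eq_mul_inv]
    exact ((dE q hq).add (dG q hq)).mul
      (((((dlam q hq).mul (dlam q hq)).mul ((dlam q hq).mul (dlam q hq))).const_mul (2:ℝ)).inv
        (hden4 q hq))
  -- the formula for μ on U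
  have hmu : ∀ q ∈ U, muQ φ q = ((Xf q : ℝ) : ℂ) + Complex.I * ((Yf q : ℝ) : ℂ) := by
    intro q hq
    have e1 : pu (phiz φ) q
        = (2:ℂ)⁻¹ • (toC (pu (pu φ) q) - Complex.I • toC (pu (pv φ) q)) := by
      show fderiv ℝ (fun y => (2:ℂ)⁻¹ • (toC (pu φ y) - Complex.I • toC (pv φ y))) q (1,0) = _
      rw [fderiv_fun_const_smul
        ((diffAt_toC (dA q hq)).fun_sub ((diffAt_toC (dB q hq)).fun_const_smul Complex.I)) ((2:ℂ)⁻¹)]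
      simp only [ContinuousLinearMap.smul_apply]
      rw [fderiv_fun_sub (diffAt_toC (dA q hq)) ((diffAt_toC (dB q hq)).fun_const_smul Complex.I)]
      simp only [ContinuousLinearMap.sub_apply]
      rw [fderiv_fun_const_smul (diffAt_toC (dB q hq)) Complex.I]
      simp only [ContinuousLinearMap.smul_apply]
      rw [fderiv_toC_apply (dA q hq), fderiv_toC_apply (dB q hq)]
      rfl
    have e2 : pv (phiz φ) q
        = (2:ℂ)⁻¹ • (toC (pv (pu φ) q) - Complex.I • toC (pv (pv φ) q)) := by
      show fderiv ℝ (fun y => (2:ℂ)⁻¹ • (toC (pu φ y) - Complex.I • toC (pv φ y))) q (0,1) = _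
      rw [fderiv_fun_const_smul
        ((diffAt_toC (dA q hq)).fun_sub ((diffAt_toC (dB q hq)).fun_const_smul Complex.I)) ((2:ℂ)⁻¹)]
      simp only [ContinuousLinearMap.smul_apply]
      rw [fderiv_fun_sub (diffAt_toC (dA q hq)) ((diffAt_toC (dB q hq)).fun_const_smul Complex.I)]
      simp only [ContinuousLinearMap.sub_apply]
      rw [fderiv_fun_const_smul (diffAt_toC (dB q hq)) Complex.I]
      simp only [ContinuousLinearMap.smul_apply]
      rw [fderiv_toC_apply (dA q hq), fderiv_toC_apply (dB q hq)]
      rfl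
    have e3 : dz (phiz φ) q
        = (4:ℂ)⁻¹ • (toC (pu (pu φ) q) - toC (pv (pv φ) q))
          - (2:ℂ)⁻¹ • (Complex.I • toC (pv (pu φ) q)) := by
      show (2:ℂ)⁻¹ • (pu (phiz φ) q - Complex.I • pv (phiz φ) q) = _
      rw [e1, e2, hCB q hq]
      funext j
      simp only [Pi.smul_apply, Pi.sub_apply, smul_eq_mul, toC]
      linear_combination (((pv (pv φ) q) j : ℝ) : ℂ)/4 * Complex.I_sq
    show cdot (dz (phiz φ) q) (toC (nvec φ q)) = _
    rw [e3, hnv q hq, toC_smul]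
    simp only [cdot_sub_left, cdot_smul_left, cdot_smul_right, cdot_toC]
    rw [show (ip (pu (pu φ) q) (Nf q) : ℝ) = Ef q from rfl,
        show (ip (pv (pv φ) q) (Nf q) : ℝ) = Gf q from rfl,
        show (ip (pv (pu φ) q) (Nf q) : ℝ) = Ff q from rfl]
    rw [hXf, hYf]
    simp only
    have hlC : ((lam q : ℝ) : ℂ) ≠ 0 := by exact_mod_cast hlne q hq
    push_cast
    field_simp
    ring
  -- the formula for H on U
  have hmc : ∀ q ∈ U, mcurv φ lam q = Wf q := by
    intro q hq
    show ip (lap φ q) (nvec φ q) / (2 * (lam q)^2) = _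
    rw [hnv q hq]
    have hlap : lap φ q = pu (pu φ) q + pv (pv φ) q := rfl
    rw [hlap, ip_add_left, ip_smul_right, ip_smul_right]
    rw [hWf, hEf, hGf]
    simp only
    field_simp
  -- outer derivatives
  have hpuMu : pu (fun q => muQ φ q) p
      = ((pu Xf p : ℝ) : ℂ) + Complex.I * ((pu Yf p : ℝ) : ℂ) := by
    show fderiv ℝ (fun q => muQ φ q) p (1,0) = _
    rw [fderiv_congr_open hU hp hmu]
    rw [fderiv_fun_add (diffAt_ofReal (dX p hp)) ((diffAt_ofReal (dY p hp)).const_mul Complex.I)]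
    simp only [ContinuousLinearMap.add_apply]
    rw [fderiv_const_mul (diffAt_ofReal (dY p hp)) Complex.I]
    simp only [ContinuousLinearMap.smul_apply, smul_eq_mul]
    rw [fderiv_ofReal_apply (dX p hp), fderiv_ofReal_apply (dY p hp)]
    rfl
  have hpvMu : pv (fun q => muQ φ q) p
      = ((pv Xf p : ℝ) : ℂ) + Complex.I * ((pv Yf p : ℝ) : ℂ) := by
    show fderiv ℝ (fun q => muQ φ q) p (0,1) = _
    rw [fderiv_congr_open hU hp hmu]
    rw [fderiv_fun_add (diffAt_ofReal (dX p hp)) ((diffAt_ofReal (dY p hp)).const_mul Complex.I)]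
    simp only [ContinuousLinearMap.add_apply]
    rw [fderiv_const_mul (diffAt_ofReal (dY p hp)) Complex.I]
    simp only [ContinuousLinearMap.smul_apply, smul_eq_mul]
    rw [fderiv_ofReal_apply (dX p hp), fderiv_ofReal_apply (dY p hp)]
    rfl
  have hmcC : ∀ q ∈ U, ((mcurv φ lam q : ℝ) : ℂ) = ((Wf q : ℝ) : ℂ) := by
    intro q hq; rw [hmc q hq]
  have hpuH : pu (fun q => ((mcurv φ lam q : ℝ) : ℂ)) p = ((pu Wf p : ℝ) : ℂ) := by
    show fderiv ℝ (fun q => ((mcurv φ lam q : ℝ) : ℂ)) p (1,0) = _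
    rw [fderiv_congr_open hU hp hmcC, fderiv_ofReal_apply (dW p hp)]
    rfl
  have hpvH : pv (fun q => ((mcurv φ lam q : ℝ) : ℂ)) p = ((pv Wf p : ℝ) : ℂ) := by
    show fderiv ℝ (fun q => ((mcurv φ lam q : ℝ) : ℂ)) p (0,1) = _
    rw [fderiv_congr_open hU hp hmcC, fderiv_ofReal_apply (dW p hp)]
    rfl
  -- ===== point-stage: atoms =====
  set l := lam p with hl
  set lu := pu lam p with hlu
  set lv := pv lam p with hlv
  set a := pu φ p with ha
  set b := pv φ p with hb
  set c := pv (pu φ) p with hc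
  set au := pu (pu φ) p with hau
  set bv := pv (pv φ) p with hbv
  have hl0 : l ≠ 0 := by rw [hl]; exact hlne p hp
  -- Clairaut identities
  have hCBp : pu (pv φ) p = c := by rw [hc]; exact hCB p hp
  have hA2 : pu (pv (pu φ)) p = pv (pu (pu φ)) p := clairaut hU sA hp
  have hB2 : pu (pv (pv φ)) p = pv (pv (pu φ)) p := by
    have h1 : pu (pv (pv φ)) p = pv (pu (pv φ)) p := clairaut hU sB hp
    have h2 : fderiv ℝ (pu (pv φ)) p = fderiv ℝ (pv (pu φ)) p := fderiv_congr_open hU hp hCB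
    rw [h1]
    show fderiv ℝ (pu (pv φ)) p (0,1) = fderiv ℝ (pv (pu φ)) p (0,1)
    rw [h2]
  have hNp : Nf p = cross a b := by simp only [hNf]; try rw [← ha, ← hb]
  -- N derivatives
  have hNu : fderiv ℝ Nf p (1,0) = cross au b + cross a c := by
    rw [hNf, fderiv_cross_apply (dA p hp) (dB p hp)]
    simp only [← pu_def]
    rw [hCBp, ← ha, ← hb, ← hau]
  have hNv : fderiv ℝ Nf p (0,1) = cross c b + cross a bv := by
    rw [hNf, fderiv_cross_apply (dA p hp) (dB p hp)]
    simp only [← pv_def]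
    try rw [← ha, ← hb, ← hc, ← hbv]
  -- E,F,G derivative expansions
  have hEv : pv Ef p = ip (pv (pu (pu φ)) p) (cross a b)
      + (ip au (cross c b) + ip au (cross a bv)) := by
    show fderiv ℝ Ef p (0,1) = _
    rw [hEf, fderiv_ip_apply (dAU p hp) (dN p hp), hNv, ip_add_right, hNp]
    simp only [← pv_def]
    try rw [← hau]
  have hFu : pu Ff p = ip (pu (pv (pu φ)) p) (cross a b)
      + (ip c (cross au b) + ip c (cross a c)) := by
    show fderiv ℝ Ff p (1,0) = _
    rw [hFf, fderiv_ip_apply (dC p hp) (dN p hp), hNu, ip_add_right, hNp]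
    simp only [← pu_def]
    try rw [← hc]
  have hFv : pv Ff p = ip (pv (pv (pu φ)) p) (cross a b)
      + (ip c (cross c b) + ip c (cross a bv)) := by
    show fderiv ℝ Ff p (0,1) = _
    rw [hFf, fderiv_ip_apply (dC p hp) (dN p hp), hNv, ip_add_right, hNp]
    simp only [← pv_def]
    try rw [← hc]
  have hGu : pu Gf p = ip (pu (pv (pv φ)) p) (cross a b)
      + (ip bv (cross au b) + ip bv (cross a c)) := by
    show fderiv ℝ Gf p (1,0) = _
    rw [hGf, fderiv_ip_apply (dBV p hp) (dN p hp), hNu, ip_add_right, hNp]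
    simp only [← pu_def]
    try rw [← hbv]
  have hFG : pv Ff p - pu Gf p = 2 * ip c (cross a bv) - ip bv (cross au b) := by
    rw [hFv, hGu, hB2]
    linear_combination (-1 : ℝ) * D_swap13 bv a c + D_xy c b
  have hEF : pv Ef p - pu Ff p = -(2 * ip c (cross au b)) + ip au (cross a bv) := by
    rw [hEv, hFu, hA2]
    linear_combination D_swap12 au c b - D_yx c a
  -- first fundamental form constraints at p
  have haa : ip a a = l * l := by rw [ha, hl, (hpt p hp).2.1]; ring
  have hbb : ip b b = l * l := by rw [hb, hl, (hpt p hp).2.2.1]; ring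
  have hab : ip a b = 0 := by rw [ha, hb]; exact (hpt p hp).2.2.2
  have hba : ip b a = 0 := by linear_combination ip_comm b a + hab
  -- derivatives of the constraints
  have hcon1 : ∀ q ∈ U, ip (pu φ q) (pu φ q) = lam q * lam q := by
    intro q hq; rw [(hpt q hq).2.1]; ring
  have hcon2 : ∀ q ∈ U, ip (pv φ q) (pv φ q) = lam q * lam q := by
    intro q hq; rw [(hpt q hq).2.2.1]; ring
  have hcon3 : ∀ q ∈ U, ip (pu φ q) (pv φ q) = 0 := fun q hq => (hpt q hq).2.2.2
  have eC1 := fderiv_congr_open (f := fun q => ip (pu φ q) (pu φ q))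
    (g := fun q => lam q * lam q) hU hp hcon1
  have eC2 := fderiv_congr_open (f := fun q => ip (pv φ q) (pv φ q))
    (g := fun q => lam q * lam q) hU hp hcon2
  have eC3 := fderiv_congr_open (f := fun q => ip (pu φ q) (pv φ q))
    (g := fun _ => (0:ℝ)) hU hp hcon3
  have e1u : fderiv ℝ (fun q => ip (pu φ q) (pu φ q)) p (1,0)
      = fderiv ℝ (fun q => lam q * lam q) p (1,0) := by rw [eC1]
  have e1v : fderiv ℝ (fun q => ip (pu φ q) (pu φ q)) p (0,1)
      = fderiv ℝ (fun q => lam q * lam q) p (0,1) := by rw [eC1]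
  have e2u : fderiv ℝ (fun q => ip (pv φ q) (pv φ q)) p (1,0)
      = fderiv ℝ (fun q => lam q * lam q) p (1,0) := by rw [eC2]
  have e2v : fderiv ℝ (fun q => ip (pv φ q) (pv φ q)) p (0,1)
      = fderiv ℝ (fun q => lam q * lam q) p (0,1) := by rw [eC2]
  have e3u : fderiv ℝ (fun q => ip (pu φ q) (pv φ q)) p (1,0)
      = fderiv ℝ (fun _ => (0:ℝ)) p (1,0) := by rw [eC3]
  have e3v : fderiv ℝ (fun q => ip (pu φ q) (pv φ q)) p (0,1)
      = fderiv ℝ (fun _ => (0:ℝ)) p (0,1) := by rw [eC3]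
  rw [fderiv_ip_apply (dA p hp) (dA p hp), fderiv_mul_apply (dlam p hp) (dlam p hp)] at e1u e1v
  rw [fderiv_ip_apply (dB p hp) (dB p hp), fderiv_mul_apply (dlam p hp) (dlam p hp)] at e2u e2v
  rw [fderiv_ip_apply (dA p hp) (dB p hp)] at e3u e3v
  simp only [fderiv_fun_const, Pi.zero_apply, ContinuousLinearMap.zero_apply] at e3u e3v
  simp only [← pu_def, ← pv_def] at e1u e1v e2u e2v e3u e3v
  rw [← ha, ← hau, ← hl, ← hlu] at e1u
  rw [← ha, ← hc, ← hl, ← hlv] at e1v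
  rw [hCBp, ← hb, ← hl, ← hlu] at e2u
  rw [← hb, ← hbv, ← hl, ← hlv] at e2v
  rw [hCBp, ← ha, ← hb, ← hau] at e3u
  rw [← ha, ← hb, ← hc, ← hbv] at e3v
  have haua : ip au a = l * lu := by linear_combination (1/2:ℝ)*e1u - (1/2:ℝ)*ip_comm a au
  have hca : ip c a = l * lv := by linear_combination (1/2:ℝ)*e1v - (1/2:ℝ)*ip_comm a c
  have hcb : ip c b = l * lu := by linear_combination (1/2:ℝ)*e2u - (1/2:ℝ)*ip_comm b c
  have hbvb : ip bv b = l * lv := by linear_combination (1/2:ℝ)*e2v - (1/2:ℝ)*ip_comm b bv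
  have haub : ip au b = -(l * lv) := by linear_combination e3u - ip_comm a c - hca
  have habv : ip a bv = -(l * lu) := by linear_combination e3v - hcb
  have hbva : ip bv a = -(l * lu) := by linear_combination ip_comm bv a + habv
  -- frame decomposition identities
  have hd1 : l^4 * ip c (cross a bv)
      = l^3 * (lv * ip c (cross a b) - lu * ip bv (cross a b)) := by
    have L := frame_scalar a b bv c a
    rw [D_yy, D_tri1] at L
    rw [haa, hbb, hab, hbva, hbvb, hca, hcb] at L
    linear_combination L
  have hd2 : l^4 * ip bv (cross au b)
      = l^3 * (lu * (ip au (cross a b) + ip bv (cross a b))) := by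
    have L := frame_scalar a b au bv b
    rw [D_yy, D_tri2] at L
    rw [show ip bv (cross b a) = -(ip bv (cross a b)) from D_swap23 bv b a] at L
    rw [haa, hbb, hab, haua, haub, hbva, hbvb, hba] at L
    linear_combination l^4 * D_swap23 bv au b - L
  have hd3 : l^4 * ip c (cross au b)
      = l^3 * (lu * ip c (cross a b) - lv * ip au (cross a b)) := by
    have L := frame_scalar a b au c b
    rw [D_yy, D_tri2] at L
    rw [show ip c (cross b a) = -(ip c (cross a b)) from D_swap23 c b a] at L
    rw [haa, hbb, hab, haua, haub, hca, hcb, hba] at L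
    linear_combination l^4 * D_swap23 c au b - L
  have hd4 : l^4 * ip au (cross a bv)
      = l^3 * (lv * (ip au (cross a b) + ip bv (cross a b))) := by
    have L := frame_scalar a b bv au a
    rw [D_yy, D_tri1] at L
    rw [haa, hbb, hab, haua, haub, hbva, hbvb] at L
    linear_combination L
  -- values of E,F,G at p
  have hEp : Ef p = ip au (cross a b) := by
    simp only [hEf, hNf]; try rw [← ha, ← hb, ← hau]
  have hFp : Ff p = ip c (cross a b) := by
    simp only [hFf, hNf]; try rw [← ha, ← hb, ← hc]
  have hGp : Gf p = ip bv (cross a b) := by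
    simp only [hGf, hNf]; try rw [← ha, ← hb, ← hbv]
  -- algebraic relations defining X, Y, W
  have hXU : ∀ q ∈ U, 4*(lam q * lam q)*Xf q = Ef q - Gf q := by
    intro q hq
    rw [hXf]
    have := hlne q hq
    field_simp
    try ring
  have hYU : ∀ q ∈ U, 2*(lam q * lam q)*Yf q = -Ff q := by
    intro q hq
    rw [hYf]
    have := hlne q hq
    field_simp
    try ring
  have hWU : ∀ q ∈ U, 2*((lam q * lam q)*(lam q * lam q))*Wf q = Ef q + Gf q := by
    intro q hq
    rw [hWf]
    have := hlne q hq
    field_simp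
    try ring
  have hX0 : 4*(l*l)*Xf p = ip au (cross a b) - ip bv (cross a b) := by
    have h0 := hXU p hp
    rw [hEp, hGp, ← hl] at h0
    exact h0
  have hY0 : 2*(l*l)*Yf p = -(ip c (cross a b)) := by
    have h0 := hYU p hp
    rw [hFp, ← hl] at h0
    exact h0
  have hW0 : 2*((l*l)*(l*l))*Wf p = ip au (cross a b) + ip bv (cross a b) := by
    have h0 := hWU p hp
    rw [hEp, hGp, ← hl] at h0
    exact h0
  -- differentiated relations (R-equations)
  have eX := fderiv_congr_open (f := fun q => 4*(lam q * lam q)*Xf q)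
    (g := fun q => Ef q - Gf q) hU hp hXU
  have eY := fderiv_congr_open (f := fun q => 2*(lam q * lam q)*Yf q)
    (g := fun q => -Ff q) hU hp hYU
  have eW := fderiv_congr_open (f := fun q => 2*((lam q * lam q)*(lam q * lam q))*Wf q)
    (g := fun q => Ef q + Gf q) hU hp hWU
  have eXu : fderiv ℝ (fun q => 4*(lam q * lam q)*Xf q) p (1,0)
      = fderiv ℝ (fun q => Ef q - Gf q) p (1,0) := by rw [eX]
  have eXv : fderiv ℝ (fun q => 4*(lam q * lam q)*Xf q) p (0,1)
      = fderiv ℝ (fun q => Ef q - Gf q) p (0,1) := by rw [eX]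
  have eYu : fderiv ℝ (fun q => 2*(lam q * lam q)*Yf q) p (1,0)
      = fderiv ℝ (fun q => -Ff q) p (1,0) := by rw [eY]
  have eYv : fderiv ℝ (fun q => 2*(lam q * lam q)*Yf q) p (0,1)
      = fderiv ℝ (fun q => -Ff q) p (0,1) := by rw [eY]
  have eWu : fderiv ℝ (fun q => 2*((lam q * lam q)*(lam q * lam q))*Wf q) p (1,0)
      = fderiv ℝ (fun q => Ef q + Gf q) p (1,0) := by rw [eW]
  have eWv : fderiv ℝ (fun q => 2*((lam q * lam q)*(lam q * lam q))*Wf q) p (0,1)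
      = fderiv ℝ (fun q => Ef q + Gf q) p (0,1) := by rw [eW]
  rw [fderiv_fun_sub (dE p hp) (dG p hp),
      fderiv_mul_apply (by exact ((dlam p hp).mul (dlam p hp)).const_mul (4:ℝ)) (dX p hp),
      fderiv_const_mul ((dlam p hp).fun_mul (dlam p hp)) (4:ℝ)] at eXu eXv
  rw [fderiv_fun_neg,
      fderiv_mul_apply (by exact ((dlam p hp).mul (dlam p hp)).const_mul (2:ℝ)) (dY p hp),
      fderiv_const_mul ((dlam p hp).fun_mul (dlam p hp)) (2:ℝ)] at eYu eYv
  rw [fderiv_fun_add (dE p hp) (dG p hp),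
      fderiv_mul_apply
        (by exact (((dlam p hp).mul (dlam p hp)).mul ((dlam p hp).mul (dlam p hp))).const_mul (2:ℝ))
        (dW p hp),
      fderiv_const_mul (((dlam p hp).fun_mul (dlam p hp)).fun_mul ((dlam p hp).fun_mul (dlam p hp))) (2:ℝ)]
    at eWu eWv
  simp only [ContinuousLinearMap.smul_apply, smul_eq_mul, ContinuousLinearMap.sub_apply,
    ContinuousLinearMap.add_apply, ContinuousLinearMap.neg_apply] at eXu eXv eYu eYv eWu eWv
  rw [fderiv_mul_apply ((dlam p hp).fun_mul (dlam p hp)) ((dlam p hp).fun_mul (dlam p hp))] at eWu eWv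
  rw [fderiv_mul_apply (dlam p hp) (dlam p hp)] at eXu eXv eYu eYv eWu eWv
  simp only [← pu_def, ← pv_def] at eXu eXv eYu eYv eWu eWv
  rw [← hl, ← hlu] at eXu eYu eWu
  rw [← hl, ← hlv] at eXv eYv eWv
  have R1 : 8*l*lu*Xf p + 4*(l*l)*pu Xf p = pu Ef p - pu Gf p := by linear_combination eXu
  have R2 : 8*l*lv*Xf p + 4*(l*l)*pv Xf p = pv Ef p - pv Gf p := by linear_combination eXv
  have R3 : 4*l*lu*Yf p + 2*(l*l)*pu Yf p = -(pu Ff p) := by linear_combination eYu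
  have R4 : 4*l*lv*Yf p + 2*(l*l)*pv Yf p = -(pv Ff p) := by linear_combination eYv
  have R5 : 8*(l*l*l)*lu*Wf p + 2*((l*l)*(l*l))*pu Wf p = pu Ef p + pu Gf p := by
    linear_combination eWu
  have R6 : 8*(l*l*l)*lv*Wf p + 2*((l*l)*(l*l))*pv Wf p = pv Ef p + pv Gf p := by
    linear_combination eWv
  -- the two real Codazzi identities
  have hRe : 2 * (pu Xf p - pv Yf p) = lam p ^ 2 * pu Wf p := by
    rw [← hl]
    apply mul_left_cancel₀ (pow_ne_zero 6 hl0)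
    linear_combination (l^4/2)*R1 - l^4*R4 - (l^4/2)*R5 + l^4*hFG
      - l^3*lu*hX0 + 2*l^3*lv*hY0 + 2*l^3*lu*hW0 + 2*hd1 - hd2
  have hIm : 2 * (pu Yf p + pv Xf p) = -(lam p ^ 2 * pv Wf p) := by
    rw [← hl]
    apply mul_left_cancel₀ (pow_ne_zero 6 hl0)
    linear_combination l^4*R3 + (l^4/2)*R2 + (l^4/2)*R6 + l^4*hEF
      - 2*l^3*lu*hY0 - l^3*lv*hX0 - 2*l^3*lv*hW0 - 2*hd3 + hd4
  -- assemble
  show (2 : ℂ)⁻¹ • (pu (fun q => muQ φ q) p + Complex.I • pv (fun q => muQ φ q) p) = _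
  rw [hpuMu, hpvMu]
  show _ = (lam p : ℂ) ^ 2 / 2 * ((2 : ℂ)⁻¹ •
    (pu (fun q => ((mcurv φ lam q : ℝ) : ℂ)) p
      - Complex.I • pv (fun q => ((mcurv φ lam q : ℝ) : ℂ)) p))
  rw [hpuH, hpvH]
  simp only [smul_eq_mul]
  have hReC := congrArg (fun t : ℝ => (t : ℂ)) hRe
  have hImC := congrArg (fun t : ℝ => (t : ℂ)) hIm
  push_cast at hReC hImC
  linear_combination (1/4 : ℂ) * hReC + (Complex.I/4) * hImC
    + ((pv Yf p : ℝ) : ℂ)/2 * Complex.I_sq
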